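/- arXiv:2008.08222 — 6 statements merged into one kernel-verified Lean document; each statement's English description precedes it below -/
import Mathlib

section
/- An acyclic orientation r of a finite connected graph G has a unique source equal to a fixed vertex v if and only if for every vertex u of G there is a directed path in r from v to u. -/
/-- For an acyclic orientation `r` of a finite connected graph `G`, the vertex `v`
is the unique source iff every vertex is reachable from `v` by a directed path. -/
theorem unique_source_iff_reachable {V : Type*} [Fintype V]
    (G : SimpleGraph V) (hG : G.Connected) (r : V → V → Prop)
    (hsub : ∀ a b, r a b → G.Adj a b)
    (htot : ∀ a b, G.Adj a b → (r a b ↔ ¬ r b a))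
    (hacyc : ∀ x, ¬ Relation.TransGen r x x) (v : V) :
    ((∀ w, ¬ r w v) ∧ ∀ u, (∀ w, ¬ r w u) → u = v) ↔
      ∀ u, Relation.ReflTransGen r v u := by
  have hwf : WellFounded (Relation.TransGen r) := by
    have : IsIrrefl V (Relation.TransGen r) := ⟨hacyc⟩
    exact Finite.wellFounded_of_trans_of_irrefl _
  constructor
  · rintro ⟨-, huniq⟩ u
    refine hwf.induction u (fun u ih => ?_)
    by_cases h : ∃ w, r w u
    · obtain ⟨w, hw⟩ := h
      exact (ih w (Relation.TransGen.single hw)).tail hw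
    · push_neg at h
      rw [huniq u h]
  · intro hreach
    refine ⟨fun w hw => hacyc v (Relation.TransGen.tail' (hreach w) hw), fun u hu => ?_⟩
    rcases (hreach u).cases_tail with h | ⟨c, _, hc⟩
    · exact h
    · exact absurd hc (hu c)
end

section
/- Contracting the edge between two vertices u, v in an acyclic orientation r of a graph G, where u and v are the only two sources of r when the edge uv is disregarded, yields an acyclic orientation of the contracted graph G/uv whose unique source is the merged vertex. -/
/-- The projection map identifying `v` with `u` (contraction of the edge `uv`). -/
def contractMap {V : Type*} [DecidableEq V] (u v : V) (x : V) : V :=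
  if x = v then u else x

/-- The orientation induced on the contracted graph `G/uv`: the edge `uv` is
removed, `u` and `v` are identified, and every remaining edge keeps its
direction. -/
def contractRel {V : Type*} [DecidableEq V] (u v : V) (r : V → V → Prop)
    (a b : V) : Prop :=
  a ≠ b ∧ ∃ a' b', contractMap u v a' = a ∧ contractMap u v b' = b ∧
    r a' b' ∧ ¬(a' = u ∧ b' = v)

/-- Contracting the edge `uv` in an acyclic orientation `r` of a connected graph `G`,
where `u` and `v` are the only two sources of `r` once the edge `uv` is
disregarded, yields an acyclic orientation of `G/uv` whose unique source is the
merged vertex. -/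
theorem contract_unique_source {V : Type*} [Fintype V] [DecidableEq V]
    (G : SimpleGraph V) (hG : G.Connected) (u v : V) (huv : G.Adj u v)
    (r : V → V → Prop)
    (hsub : ∀ a b, r a b → G.Adj a b)
    (htot : ∀ a b, G.Adj a b → (r a b ↔ ¬ r b a))
    (hacyc : ∀ x, ¬ Relation.TransGen r x x)
    (hruv : r u v)
    (hsrc_u : ∀ w, ¬ r w u)
    (hsrc_v : ∀ w, w ≠ u → ¬ r w v)
    (honly : ∀ w, (∀ x, r x w → x = u ∧ w = v) → w = u ∨ w = v) :
    (∀ x, ¬ Relation.TransGen (contractRel u v r) x x) ∧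
    (∀ x, ¬ contractRel u v r x u) ∧
    (∀ w, w ≠ v → (∀ x, ¬ contractRel u v r x w) → w = u) := by
  have hstep : ∀ a b, contractRel u v r a b → Relation.TransGen r a b := by
    rintro a b ⟨hab, a', b', ha, hb, hr, hne⟩
    have hb'v : b' ≠ v := by
      intro h
      subst h
      have ha'u : a' = u := by
        by_contra h'
        exact hsrc_v a' h' hr
      exact hne ⟨ha'u, rfl⟩
    have hbb : b = b' := by
      simp only [contractMap, if_neg hb'v] at hb
      exact hb.symm
    subst hbb
    by_cases ha'v : a' = v
    · subst ha'v
      simp only [contractMap, if_pos rfl] at ha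
      subst ha
      exact Relation.TransGen.head hruv (Relation.TransGen.single hr)
    · simp only [contractMap, if_neg ha'v] at ha
      subst ha
      exact Relation.TransGen.single hr
  refine ⟨?_, ?_, ?_⟩
  · intro x hx
    have h2 := Relation.TransGen.mono hstep x x hx
    rw [Relation.transGen_idem] at h2
    exact hacyc x h2
  · rintro x ⟨hab, a', b', ha, hb, hr, hne⟩
    by_cases hb'v : b' = v
    · subst hb'v
      have ha'u : a' = u := by
        by_contra h'
        exact hsrc_v a' h' hr
      exact hne ⟨ha'u, rfl⟩
    · simp only [contractMap, if_neg hb'v] at hb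
      subst hb
      exact hsrc_u a' hr
  · intro w hwv hno
    have key : ∀ x, r x w → x = u ∧ w = v := by
      intro x hx
      exfalso
      apply hno (contractMap u v x)
      refine ⟨?_, x, w, rfl, ?_, hx, fun h => hwv h.2⟩
      · by_cases hxv : x = v
        · simp only [contractMap, if_pos hxv]
          intro h
          exact hsrc_u x (by rwa [← h] at hx)
        · simp only [contractMap, if_neg hxv]
          intro h
          exact hacyc x (.single (by rwa [← h] at hx))
      · simp [contractMap, hwv]
    rcases honly w key with h | h
    · exact h
    · exact absurd h hwv
end

section
/- Rotation invariance: for any set S ⊆ {0,...,n−1} and any integer t, the number of pairs (ρ, r), where ρ is a partition of {0,...,n−1} having S as a block and all other blocks of size 2, and r is a root-connected orientation of the crossing graph G(ρ) with root S, equals the corresponding count for the rotated set S + t (elementwise addition mod n). -/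
/-- Two blocks `B`, `B'` form a crossing: there are `i, k ∈ B` and `j, l ∈ B'`
with `i < j < k < l` or `i > j > k > l`. -/
def Crosses (B B' : Finset ℕ) : Prop :=
  ∃ i ∈ B, ∃ k ∈ B, ∃ j ∈ B', ∃ l ∈ B',
    (i < j ∧ j < k ∧ k < l) ∨ (i > j ∧ j > k ∧ k > l)

/-- `ρ` is a set partition of `{0, ..., n-1}`. -/
def IsPartitionOf (n : ℕ) (ρ : Finset (Finset ℕ)) : Prop :=
  (∀ B ∈ ρ, B.Nonempty) ∧
  (∀ B ∈ ρ, ∀ B' ∈ ρ, B ≠ B' → Disjoint B B') ∧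
  ρ.sup id = Finset.range n

/-- `r` is an orientation of the crossing graph `G(ρ)`: it relates exactly the
pairs of distinct crossing blocks of `ρ`, choosing one direction for each edge. -/
def IsOrientation (ρ : Finset (Finset ℕ)) (r : Finset ℕ → Finset ℕ → Prop) : Prop :=
  (∀ B B', r B B' → B ∈ ρ ∧ B' ∈ ρ ∧ B ≠ B' ∧ Crosses B B') ∧
  (∀ B ∈ ρ, ∀ B' ∈ ρ, B ≠ B' → Crosses B B' → (r B B' ↔ ¬ r B' B))

/-- An orientation is acyclic if it has no directed cycle. -/
def AcyclicRel (r : Finset ℕ → Finset ℕ → Prop) : Prop :=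
  ∀ B, ¬ Relation.TransGen r B B

/-- `r` is a root-connected orientation of `G(ρ)` with root `S`: it is an acyclic
orientation and `S` is its unique source. -/
def RootConnected (ρ : Finset (Finset ℕ)) (r : Finset ℕ → Finset ℕ → Prop)
    (S : Finset ℕ) : Prop :=
  IsOrientation ρ r ∧ AcyclicRel r ∧ S ∈ ρ ∧ (∀ B', ¬ r B' S) ∧
    (∀ B ∈ ρ, (∀ B', ¬ r B' B) → B = S)

/-- `ρ ∈ M_S(n)`: a partition of `{0,...,n-1}` with `S` as a block and all
other blocks of size 2. -/
def MSPartition (n : ℕ) (S : Finset ℕ) (ρ : Finset (Finset ℕ)) : Prop :=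
  IsPartitionOf n ρ ∧ S ∈ ρ ∧ ∀ B ∈ ρ, B ≠ S → B.card = 2

/-- The number of pairs `(ρ, r)` with `ρ ∈ M_S(n)` and `r` a root-connected
orientation of `G(ρ)` with root `S`.  (This is `A_{k+1}(S)` when `n = |S| + 2k`.) -/
noncomputable def countA (n : ℕ) (S : Finset ℕ) : ℕ :=
  Nat.card {p : Finset (Finset ℕ) × (Finset ℕ → Finset ℕ → Prop) //
    MSPartition n S p.1 ∧ RootConnected p.1 p.2 S}


/-! ### Auxiliary development -/

/-- basic rotation by one step -/
def rotOne (n x : ℕ) : ℕ := (x + 1) % n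

lemma rotOne_mem {n x : ℕ} (hx : x ∈ Finset.range n) : rotOne n x ∈ Finset.range n := by
  simp only [Finset.mem_range] at *
  exact Nat.mod_lt _ (by omega)

lemma crosses_rotOne {n : ℕ} {B B' : Finset ℕ} (hB : B ⊆ Finset.range n)
    (hB' : B' ⊆ Finset.range n) (h : Crosses B B') :
    Crosses (B.image (rotOne n)) (B'.image (rotOne n)) := by
  obtain ⟨i, hi, k, hk, j, hj, l, hl, hpat⟩ := h
  have hin : i < n := Finset.mem_range.1 (hB hi)
  have hkn : k < n := Finset.mem_range.1 (hB hk)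
  have hjn : j < n := Finset.mem_range.1 (hB' hj)
  have hln : l < n := Finset.mem_range.1 (hB' hl)
  have mem : ∀ {C : Finset ℕ} {x : ℕ}, x ∈ C → rotOne n x ∈ C.image (rotOne n) :=
    fun hx => Finset.mem_image_of_mem _ hx
  have rid : ∀ {x : ℕ}, x + 1 < n → rotOne n x = x + 1 := fun h => Nat.mod_eq_of_lt h
  have rzero : ∀ {x : ℕ}, x + 1 = n → rotOne n x = 0 := by
    intro x h; unfold rotOne; rw [h, Nat.mod_self]
  rcases hpat with ⟨h1, h2, h3⟩ | ⟨h1, h2, h3⟩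
  · -- i < j < k < l
    rcases Nat.lt_or_ge (l + 1) n with hlt | hge
    · exact ⟨_, mem hi, _, mem hk, _, mem hj, _, mem hl, Or.inl (by
        rw [rid (by omega), rid (by omega), rid (by omega), rid hlt]; omega)⟩
    · have hle : l + 1 = n := by omega
      refine ⟨_, mem hk, _, mem hi, _, mem hj, _, mem hl, Or.inr ?_⟩
      rw [rzero hle, rid (by omega), rid (by omega), rid (by omega)]; omega
  · -- i > j > k > l
    rcases Nat.lt_or_ge (i + 1) n with hlt | hge
    · exact ⟨_, mem hi, _, mem hk, _, mem hj, _, mem hl, Or.inr (by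
        rw [rid hlt, rid (by omega), rid (by omega), rid (by omega)]; omega)⟩
    · have hle : i + 1 = n := by omega
      refine ⟨_, mem hi, _, mem hk, _, mem hl, _, mem hj, Or.inl ?_⟩
      rw [rzero hle, rid (by omega), rid (by omega), rid (by omega)]; omega

lemma rotOne_iter_mem {n m : ℕ} : ∀ {x : ℕ}, x ∈ Finset.range n →
    (rotOne n)^[m] x ∈ Finset.range n := by
  induction m with
  | zero => intro x hx; simpa using hx
  | succ m ih =>
    intro x hx
    rw [Function.iterate_succ_apply']
    exact rotOne_mem (ih hx)

lemma crosses_rotOne_iter {n m : ℕ} {B B' : Finset ℕ} (hB : B ⊆ Finset.range n)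
    (hB' : B' ⊆ Finset.range n) (h : Crosses B B') :
    Crosses (B.image ((rotOne n)^[m])) (B'.image ((rotOne n)^[m])) := by
  induction m with
  | zero => simpa using h
  | succ m ih =>
    have e : ∀ C : Finset ℕ, C.image ((rotOne n)^[m+1]) =
        (C.image ((rotOne n)^[m])).image (rotOne n) := by
      intro C
      rw [Finset.image_image]
      exact Finset.image_congr (fun x _ => (Function.iterate_succ_apply' (rotOne n) m x))
    rw [e, e]
    exact crosses_rotOne (fun x hx => by
        obtain ⟨y, hy, rfl⟩ := Finset.mem_image.1 hx; exact rotOne_iter_mem (hB hy))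
      (fun x hx => by
        obtain ⟨y, hy, rfl⟩ := Finset.mem_image.1 hx; exact rotOne_iter_mem (hB' hy)) ih

lemma rotOne_iter_eq {n : ℕ} (hn : 0 < n) (m : ℕ) {x : ℕ} (hx : x < n) :
    (rotOne n)^[m] x = (x + m) % n := by
  induction m with
  | zero => simp [Nat.mod_eq_of_lt hx]
  | succ m ih =>
    rw [Function.iterate_succ_apply', ih]
    unfold rotOne
    rw [Nat.mod_add_mod]
    ring_nf

section Transport

variable {n : ℕ} {f g : ℕ → ℕ}

lemma image_roundtrip (hgf : ∀ x ∈ Finset.range n, g (f x) = x) {B : Finset ℕ}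
    (hB : B ⊆ Finset.range n) : (B.image f).image g = B := by
  rw [Finset.image_image]
  calc B.image (g ∘ f) = B.image id := Finset.image_congr (fun x hx => hgf x (hB hx))
    _ = B := Finset.image_id

lemma block_subset {ρ : Finset (Finset ℕ)} (hρ : IsPartitionOf n ρ) {B : Finset ℕ}
    (hB : B ∈ ρ) : B ⊆ Finset.range n := by
  rw [← hρ.2.2]
  exact Finset.le_sup (f := id) hB

/-- The transported relation. -/
def TransportRel (ρ' : Finset (Finset ℕ)) (g : ℕ → ℕ)
    (r : Finset ℕ → Finset ℕ → Prop) : Finset ℕ → Finset ℕ → Prop :=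
  fun B B' => B ∈ ρ' ∧ B' ∈ ρ' ∧ r (B.image g) (B'.image g)

lemma transport_spec
    (hf : ∀ x ∈ Finset.range n, f x ∈ Finset.range n)
    (hg : ∀ x ∈ Finset.range n, g x ∈ Finset.range n)
    (hgf : ∀ x ∈ Finset.range n, g (f x) = x)
    (hfg : ∀ x ∈ Finset.range n, f (g x) = x)
    (hcf : ∀ B B' : Finset ℕ, B ⊆ Finset.range n → B' ⊆ Finset.range n →
      Crosses B B' → Crosses (B.image f) (B'.image f))
    (hcg : ∀ B B' : Finset ℕ, B ⊆ Finset.range n → B' ⊆ Finset.range n →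
      Crosses (B.image f) (B'.image f) → Crosses B B')
    {S : Finset ℕ} {ρ : Finset (Finset ℕ)} {r : Finset ℕ → Finset ℕ → Prop}
    (h : MSPartition n S ρ ∧ RootConnected ρ r S) :
    MSPartition n (S.image f) (ρ.image (Finset.image f)) ∧
      RootConnected (ρ.image (Finset.image f)) (TransportRel (ρ.image (Finset.image f)) g r)
        (S.image f) := by
  obtain ⟨⟨hpart, hSρ, hcard⟩, ⟨hor1, hor2⟩, hacy, hSρ', hnosrc, huniq⟩ := h
  set ρ' := ρ.image (Finset.image f) with hρ'
  set r' := TransportRel ρ' g r with hr'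
  have hsub : ∀ B ∈ ρ, B ⊆ Finset.range n := fun B hB => block_subset hpart hB
  have himg_sub : ∀ B ∈ ρ, B.image f ⊆ Finset.range n := by
    intro B hB x hx
    obtain ⟨y, hy, rfl⟩ := Finset.mem_image.1 hx
    exact hf y (hsub B hB hy)
  have hrt : ∀ B ∈ ρ, (B.image f).image g = B := fun B hB =>
    image_roundtrip hgf (hsub B hB)
  -- blocks of ρ' and the g-image
  have hmem' : ∀ {B : Finset ℕ}, B ∈ ρ' → ∃ C ∈ ρ, B = C.image f := by
    intro B hB
    obtain ⟨C, hC, rfl⟩ := Finset.mem_image.1 hB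
    exact ⟨C, hC, rfl⟩
  have hginv : ∀ {B : Finset ℕ}, B ∈ ρ' → (B.image g ∈ ρ ∧ (B.image g).image f = B) := by
    intro B hB
    obtain ⟨C, hC, rfl⟩ := hmem' hB
    rw [hrt C hC]
    exact ⟨hC, rfl⟩
  have hinj : ∀ C ∈ ρ, ∀ C' ∈ ρ, C.image f = C'.image f → C = C' := by
    intro C hC C' hC' he
    rw [← hrt C hC, ← hrt C' hC', he]
  constructor
  · -- MSPartition
    refine ⟨⟨?_, ?_, ?_⟩, Finset.mem_image_of_mem _ hSρ, ?_⟩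
    · intro B hB
      obtain ⟨C, hC, rfl⟩ := hmem' hB
      exact (hpart.1 C hC).image f
    · intro B hB B' hB' hne
      obtain ⟨C, hC, rfl⟩ := hmem' hB
      obtain ⟨C', hC', rfl⟩ := hmem' hB'
      have hCC' : C ≠ C' := fun h => hne (by rw [h])
      have hdisj := hpart.2.1 C hC C' hC' hCC'
      rw [Finset.disjoint_left]
      intro x hx hx'
      obtain ⟨y, hy, rfl⟩ := Finset.mem_image.1 hx
      obtain ⟨y', hy', he⟩ := Finset.mem_image.1 hx'
      have : y' = y := by
        have := congrArg g he
        rwa [hgf y' (hsub C' hC' hy'), hgf y (hsub C hC hy)] at this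
      exact (Finset.disjoint_left.1 hdisj hy) (this ▸ hy')
    · apply Finset.Subset.antisymm
      · intro x hx
        rw [Finset.mem_sup] at hx
        obtain ⟨B, hB, hx⟩ := hx
        obtain ⟨C, hC, rfl⟩ := hmem' hB
        exact himg_sub C hC hx
      · intro x hx
        have hgx : g x ∈ Finset.range n := hg x hx
        rw [← hpart.2.2, Finset.mem_sup] at hgx
        obtain ⟨C, hC, hgx⟩ := hgx
        rw [Finset.mem_sup]
        refine ⟨C.image f, Finset.mem_image_of_mem _ hC, ?_⟩
        have : f (g x) ∈ Finset.image f C := Finset.mem_image_of_mem f hgx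
        rwa [hfg x hx] at this
    · intro B hB hne
      obtain ⟨C, hC, rfl⟩ := hmem' hB
      have hCS : C ≠ S := fun h => hne (by rw [h])
      rw [Finset.card_image_of_injOn]
      · exact hcard C hC hCS
      · intro a ha b hb he
        have := congrArg g he
        rwa [hgf a (hsub C hC ha), hgf b (hsub C hC hb)] at this
  · -- RootConnected
    have hSrt : (S.image f).image g = S := image_roundtrip hgf (hsub S hSρ)
    refine ⟨⟨?_, ?_⟩, ?_, Finset.mem_image_of_mem _ hSρ, ?_, ?_⟩
    · rintro B B' ⟨hB, hB', hr⟩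
      obtain ⟨hgB, hgB', hne, hcr⟩ := hor1 _ _ hr
      refine ⟨hB, hB', ?_, ?_⟩
      · rintro rfl; exact hne rfl
      · have := hcf _ _ (hsub _ hgB) (hsub _ hgB') hcr
        rwa [(hginv hB).2, (hginv hB').2] at this
    · intro B hB B' hB' hne hcr
      obtain ⟨C, hC, rfl⟩ := hmem' hB
      obtain ⟨C', hC', rfl⟩ := hmem' hB'
      have hne' : C ≠ C' := fun h => hne (by rw [h])
      have hcr' : Crosses C C' := hcg C C' (hsub C hC) (hsub C' hC') hcr
      have hiff := hor2 C hC C' hC' hne' hcr'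
      have e1 : r' (C.image f) (C'.image f) ↔ r C C' := by
        constructor
        · rintro ⟨_, _, hr⟩; rwa [hrt C hC, hrt C' hC'] at hr
        · intro hr; exact ⟨hB, hB', by rwa [hrt C hC, hrt C' hC']⟩
      have e2 : r' (C'.image f) (C.image f) ↔ r C' C := by
        constructor
        · rintro ⟨_, _, hr⟩; rwa [hrt C hC, hrt C' hC'] at hr
        · intro hr; exact ⟨hB', hB, by rwa [hrt C hC, hrt C' hC']⟩
      rw [e1, e2]
      exact hiff
    · -- acyclic
      intro B hB
      have key : ∀ {B C : Finset ℕ}, Relation.TransGen r' B C →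
          Relation.TransGen r (B.image g) (C.image g) := by
        intro B C h
        induction h with
        | single h => exact Relation.TransGen.single h.2.2
        | tail _ h ih => exact Relation.TransGen.tail ih h.2.2
      exact hacy _ (key hB)
    · rintro B' ⟨_, _, hr⟩
      rw [hSrt] at hr
      exact hnosrc _ hr
    · intro B hB hsrc
      obtain ⟨C, hC, rfl⟩ := hmem' hB
      have : C = S := by
        apply huniq C hC
        intro C'' hrC
        have hC''ρ : C'' ∈ ρ := (hor1 _ _ hrC).1
        exact hsrc (C''.image f) ⟨Finset.mem_image_of_mem _ hC''ρ, hB,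
          by rwa [hrt C'' hC''ρ, hrt C hC]⟩
      rw [this]

lemma transport_roundtrip
    (hgf : ∀ x ∈ Finset.range n, g (f x) = x)
    {ρ : Finset (Finset ℕ)} {r : Finset ℕ → Finset ℕ → Prop}
    (hpart : IsPartitionOf n ρ)
    (ho : ∀ B B', r B B' → B ∈ ρ ∧ B' ∈ ρ) :
    ((ρ.image (Finset.image f)).image (Finset.image g) = ρ) ∧
      (TransportRel ((ρ.image (Finset.image f)).image (Finset.image g)) f
        (TransportRel (ρ.image (Finset.image f)) g r) = r) := by
  have hsub : ∀ B ∈ ρ, B ⊆ Finset.range n := fun B hB => block_subset hpart hB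
  have hrt : ∀ B ∈ ρ, (B.image f).image g = B := fun B hB =>
    image_roundtrip hgf (hsub B hB)
  have e1 : (ρ.image (Finset.image f)).image (Finset.image g) = ρ := by
    rw [Finset.image_image]
    calc ρ.image (Finset.image g ∘ Finset.image f)
        = ρ.image id := Finset.image_congr (fun B hB => by
          simp only [Function.comp_apply, id_eq]
          exact hrt B hB)
      _ = ρ := Finset.image_id
  refine ⟨e1, ?_⟩
  rw [e1]
  funext B B'
  apply propext
  constructor
  · rintro ⟨hB, hB', _, _, hr⟩
    rwa [hrt B hB, hrt B' hB'] at hr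
  · intro hr
    obtain ⟨hB, hB'⟩ := ho _ _ hr
    exact ⟨hB, hB', Finset.mem_image_of_mem _ hB, Finset.mem_image_of_mem _ hB',
      by rwa [hrt B hB, hrt B' hB']⟩

lemma countA_eq
    (hf : ∀ x ∈ Finset.range n, f x ∈ Finset.range n)
    (hg : ∀ x ∈ Finset.range n, g x ∈ Finset.range n)
    (hgf : ∀ x ∈ Finset.range n, g (f x) = x)
    (hfg : ∀ x ∈ Finset.range n, f (g x) = x)
    (hcf : ∀ B B' : Finset ℕ, B ⊆ Finset.range n → B' ⊆ Finset.range n →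
      Crosses B B' → Crosses (B.image f) (B'.image f))
    (hcg : ∀ B B' : Finset ℕ, B ⊆ Finset.range n → B' ⊆ Finset.range n →
      Crosses B B' → Crosses (B.image g) (B'.image g))
    {S : Finset ℕ} (hS : S ⊆ Finset.range n) :
    countA n S = countA n (S.image f) := by
  have himg_sub : ∀ (h : ℕ → ℕ), (∀ x ∈ Finset.range n, h x ∈ Finset.range n) →
      ∀ B : Finset ℕ, B ⊆ Finset.range n → B.image h ⊆ Finset.range n := by
    intro h hh B hB x hx
    obtain ⟨y, hy, rfl⟩ := Finset.mem_image.1 hx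
    exact hh y (hB hy)
  have hcg' : ∀ B B' : Finset ℕ, B ⊆ Finset.range n → B' ⊆ Finset.range n →
      Crosses (B.image f) (B'.image f) → Crosses B B' := by
    intro B B' hB hB' h
    have := hcg _ _ (himg_sub f hf B hB) (himg_sub f hf B' hB') h
    rwa [image_roundtrip hgf hB, image_roundtrip hgf hB'] at this
  have hcf' : ∀ B B' : Finset ℕ, B ⊆ Finset.range n → B' ⊆ Finset.range n →
      Crosses (B.image g) (B'.image g) → Crosses B B' := by
    intro B B' hB hB' h
    have := hcf _ _ (himg_sub g hg B hB) (himg_sub g hg B' hB') h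
    rwa [image_roundtrip hfg hB, image_roundtrip hfg hB'] at this
  apply Nat.card_congr
  refine
    { toFun := fun p => ⟨(p.1.1.image (Finset.image f),
        TransportRel (p.1.1.image (Finset.image f)) g p.1.2),
        transport_spec hf hg hgf hfg hcf hcg' p.2⟩,
      invFun := fun q => ⟨(q.1.1.image (Finset.image g),
        TransportRel (q.1.1.image (Finset.image g)) f q.1.2), ?_⟩,
      left_inv := ?_, right_inv := ?_ }
  · have h := transport_spec hg hf hfg hgf hcg hcf' q.2
    rwa [image_roundtrip hgf hS] at h
  · intro p
    apply Subtype.ext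
    have h := transport_roundtrip hgf p.2.1.1
      (fun B B' hr => ⟨(p.2.2.1.1 B B' hr).1, (p.2.2.1.1 B B' hr).2.1⟩)
    exact Prod.ext h.1 h.2
  · intro q
    apply Subtype.ext
    have h := transport_roundtrip hfg q.2.1.1
      (fun B B' hr => ⟨(q.2.2.1.1 B B' hr).1, (q.2.2.1.1 B B' hr).2.1⟩)
    exact Prod.ext h.1 h.2

end Transport


/-- Rotation invariance: rotating the root set `S` around the circle
`{0, ..., n-1}` does not change `A_{k+1}(S)`. -/
theorem countA_rotation (n k : ℕ) (S : Finset ℕ) (hS : S ⊆ Finset.range n)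
    (hn : n = S.card + 2 * k) (t : ℤ) :
    countA n S = countA n (S.image fun x : ℕ => (((x : ℤ) + t) % (n : ℤ)).toNat) := by
  rcases Nat.eq_zero_or_pos n with rfl | hpos
  · have : S = ∅ := Finset.subset_empty.1 (by simpa using hS)
    subst this
    simp
  · set m := (t % (n : ℤ)).toNat with hm
    have hn0 : (0 : ℤ) < (n : ℤ) := by exact_mod_cast hpos
    have hmod : t % (n : ℤ) = (m : ℤ) :=
      (Int.toNat_of_nonneg (Int.emod_nonneg t hn0.ne')).symm
    have hmn : m < n := by
      have h1 := Int.emod_lt_of_pos t hn0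
      rw [hmod] at h1
      exact_mod_cast h1
    have hiter_n : ∀ x : ℕ, x < n → (rotOne n)^[n] x = x := by
      intro x hx
      rw [rotOne_iter_eq hpos n hx, Nat.add_mod_right, Nat.mod_eq_of_lt hx]
    have hgf : ∀ x ∈ Finset.range n, (rotOne n)^[n - m] ((rotOne n)^[m] x) = x := by
      intro x hx
      rw [← Function.iterate_add_apply]
      have e : n - m + m = n := by omega
      rw [e]
      exact hiter_n x (Finset.mem_range.1 hx)
    have hfg : ∀ x ∈ Finset.range n, (rotOne n)^[m] ((rotOne n)^[n - m] x) = x := by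
      intro x hx
      rw [← Function.iterate_add_apply]
      have e : m + (n - m) = n := by omega
      rw [e]
      exact hiter_n x (Finset.mem_range.1 hx)
    have key := countA_eq (f := (rotOne n)^[m]) (g := (rotOne n)^[n - m])
      (fun x hx => rotOne_iter_mem hx) (fun x hx => rotOne_iter_mem hx) hgf hfg
      (fun B B' hB hB' h => crosses_rotOne_iter hB hB' h)
      (fun B B' hB hB' h => crosses_rotOne_iter hB hB' h) hS
    rw [key]
    congr 1
    apply Finset.image_congr
    intro x hx
    have hxn : x < n := Finset.mem_range.1 (hS hx)
    rw [rotOne_iter_eq hpos m hxn]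
    -- goal : (x + m) % n = (((x : ℤ) + t) % n).toNat
    have hint : ((x : ℤ) + t) % (n : ℤ) = (((x + m) % n : ℕ) : ℤ) := by
      conv_lhs => rw [← Int.emod_add_mul_ediv t (n : ℤ)]
      rw [← add_assoc, Int.add_mul_emod_self_left, hmod]
      push_cast
      ring_nf
    show (x + m) % n = (((x : ℤ) + t) % (n : ℤ)).toNat
    rw [hint, Int.toNat_natCast]
end

section
/- Merging invariance: if S = {a_1, ..., a_m} ⊆ {0,...,n−1} with a_1 < ... < a_m and a_{j+1} = a_j + 1 for some j, then A_{k+1}(S) = A_{k+1}(S'), where S' = {a_1, ..., a_j, a_{j+2} − 1, ..., a_m − 1} ⊆ {0,...,n−2} is obtained by merging the two consecutive points a_j, a_j+1 into one. -/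
def fm (a x : ℕ) : ℕ := if x ≤ a then x else x - 1
def gm (a x : ℕ) : ℕ := if x ≤ a then x else x + 1

lemma fm_gm (a x : ℕ) : fm a (gm a x) = x := by unfold fm gm; split_ifs <;> omega
lemma gm_fm (a x : ℕ) (h : x ≠ a + 1) : gm a (fm a x) = x := by unfold fm gm; split_ifs <;> omega
lemma fm_mono (a : ℕ) {x y : ℕ} (h : x ≤ y) : fm a x ≤ fm a y := by unfold fm; split_ifs <;> omega
lemma fm_lt (a : ℕ) {x y : ℕ} (h : x < y) (h2 : ¬(x = a ∧ y = a + 1)) :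
    fm a x < fm a y := by unfold fm; split_ifs <;> omega
lemma lt_of_fm_lt (a : ℕ) {x y : ℕ} (h : fm a x < fm a y) : x < y := by
  revert h; unfold fm; split_ifs <;> omega
lemma gm_inj (a : ℕ) : Function.Injective (gm a) := by
  intro x y h; have := congrArg (fm a) h; rwa [fm_gm, fm_gm] at this
lemma gm_ne (a x : ℕ) : gm a x ≠ a + 1 := by unfold gm; split_ifs <;> omega
lemma fm_eq_a (a x : ℕ) (h : fm a x = a) : x = a ∨ x = a + 1 := by
  revert h; unfold fm; split_ifs <;> omega

def Fmap (a : ℕ) (B : Finset ℕ) : Finset ℕ := B.image (fm a)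
def Sp (a : ℕ) (S : Finset ℕ) : Finset ℕ := (S.erase (a + 1)).image (fm a)
def Gmap (a : ℕ) (S X : Finset ℕ) : Finset ℕ :=
  if X = Sp a S then S else X.image (gm a)

lemma Sp_eq {a : ℕ} {S : Finset ℕ} (ha : a ∈ S) : Fmap a S = Sp a S := by
  apply Finset.Subset.antisymm
  · intro y hy
    obtain ⟨x, hx, rfl⟩ := Finset.mem_image.mp hy
    by_cases hxa : x = a + 1
    · subst hxa
      have : fm a (a + 1) = fm a a := by unfold fm; split_ifs <;> omega
      rw [this]
      exact Finset.mem_image_of_mem _ (Finset.mem_erase.mpr ⟨by omega, ha⟩)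
    · exact Finset.mem_image_of_mem _ (Finset.mem_erase.mpr ⟨hxa, hx⟩)
  · exact Finset.image_subset_image (Finset.erase_subset _ _)

lemma a_mem_Sp {a : ℕ} {S : Finset ℕ} (ha : a ∈ S) : a ∈ Sp a S := by
  unfold Sp
  exact Finset.mem_image.mpr ⟨a, Finset.mem_erase.mpr ⟨by omega, ha⟩, by unfold fm; simp⟩

lemma FG {a : ℕ} {S : Finset ℕ} (ha : a ∈ S) (X : Finset ℕ) :
    Fmap a (Gmap a S X) = X := by
  unfold Gmap
  split_ifs with h
  · rw [Sp_eq ha, h]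
  · unfold Fmap
    rw [Finset.image_image]
    have : (fm a ∘ gm a) = id := funext fun x => fm_gm a x
    rw [this, Finset.image_id]

lemma block_eq_S {ρ : Finset (Finset ℕ)} {S B : Finset ℕ} {x : ℕ}
    (hdis : ∀ B ∈ ρ, ∀ B' ∈ ρ, B ≠ B' → Disjoint B B')
    (hS : S ∈ ρ) (hB : B ∈ ρ) (hxB : x ∈ B) (hxS : x ∈ S) : B = S := by
  by_contra h
  exact Finset.disjoint_left.mp (hdis B hB S hS h) hxB hxS

lemma Fmap_ne_Sp {ρ : Finset (Finset ℕ)} {S B : Finset ℕ} {a : ℕ}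
    (hdis : ∀ B ∈ ρ, ∀ B' ∈ ρ, B ≠ B' → Disjoint B B')
    (hSρ : S ∈ ρ) (ha : a ∈ S) (ha1 : a + 1 ∈ S)
    (hB : B ∈ ρ) (hBS : B ≠ S) : Fmap a B ≠ Sp a S := by
  intro h
  have haF : a ∈ Fmap a B := h ▸ a_mem_Sp ha
  obtain ⟨x, hx, hfx⟩ := Finset.mem_image.mp haF
  rcases fm_eq_a a x hfx with rfl | rfl
  · exact hBS (block_eq_S hdis hSρ hB hx ha)
  · exact hBS (block_eq_S hdis hSρ hB hx ha1)

lemma GF {ρ : Finset (Finset ℕ)} {S B : Finset ℕ} {a : ℕ}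
    (hdis : ∀ B ∈ ρ, ∀ B' ∈ ρ, B ≠ B' → Disjoint B B')
    (hSρ : S ∈ ρ) (ha : a ∈ S) (ha1 : a + 1 ∈ S)
    (hB : B ∈ ρ) : Gmap a S (Fmap a B) = B := by
  by_cases hBS : B = S
  · subst hBS
    rw [Sp_eq ha]
    unfold Gmap
    rw [if_pos rfl]
  · unfold Gmap
    rw [if_neg (Fmap_ne_Sp hdis hSρ ha ha1 hB hBS)]
    unfold Fmap
    rw [Finset.image_image]
    apply Finset.image_congr (g := id) ?_ |>.trans (Finset.image_id)
    intro x hx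
    have hxS : x ∉ S := Finset.disjoint_left.mp (hdis B hB S hSρ hBS) hx
    exact gm_fm a x (fun h => hxS (h ▸ ha1))

lemma msPartition_merge {n a : ℕ} {S : Finset ℕ} {ρ : Finset (Finset ℕ)}
    (hms : MSPartition n S ρ) (ha : a ∈ S) (ha1 : a + 1 ∈ S) :
    MSPartition (n - 1) (Sp a S) (ρ.image (Fmap a)) := by
  obtain ⟨⟨hne, hdis, hsup⟩, hSρ, hcard⟩ := hms
  have hsub : ∀ B ∈ ρ, B ⊆ Finset.range n := by
    intro B hB
    have : id B ≤ ρ.sup id := Finset.le_sup hB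
    rwa [hsup] at this
  have han : a + 2 ≤ n := by
    have := Finset.mem_range.mp (hsub S hSρ ha1); omega
  -- elements equal to a or a+1 live in S
  have hmemS : ∀ B ∈ ρ, ∀ x ∈ B, (x = a ∨ x = a + 1) → B = S := by
    rintro B hB x hx (rfl | rfl)
    · exact block_eq_S hdis hSρ hB hx ha
    · exact block_eq_S hdis hSρ hB hx ha1
  refine ⟨⟨?_, ?_, ?_⟩, ?_, ?_⟩
  · rintro B' hB'
    obtain ⟨B, hB, rfl⟩ := Finset.mem_image.mp hB'
    exact (hne B hB).image _
  · rintro B' hB' C' hC' hBC'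
    obtain ⟨B, hB, rfl⟩ := Finset.mem_image.mp hB'
    obtain ⟨C, hC, rfl⟩ := Finset.mem_image.mp hC'
    have hBC : B ≠ C := fun h => hBC' (by rw [h])
    rw [Finset.disjoint_left]
    rintro z hzB hzC
    obtain ⟨x, hx, rfl⟩ := Finset.mem_image.mp hzB
    obtain ⟨y, hy, hyx⟩ := Finset.mem_image.mp hzC
    by_cases hxa : x = a + 1
    · have hBS : B = S := hmemS B hB x hx (Or.inr hxa)
      have : fm a y = a := by rw [hyx, hxa]; unfold fm; split_ifs <;> omega
      have hCS : C = S := hmemS C hC y hy (fm_eq_a a y this)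
      exact hBC (hBS.trans hCS.symm)
    · by_cases hya : y = a + 1
      · have hCS : C = S := hmemS C hC y hy (Or.inr hya)
        have : fm a x = a := by rw [← hyx, hya]; unfold fm; split_ifs <;> omega
        have hBS : B = S := hmemS B hB x hx (fm_eq_a a x this)
        exact hBC (hBS.trans hCS.symm)
      · have : x = y := by
          have := congrArg (gm a) hyx
          rw [gm_fm a x hxa, gm_fm a y hya] at this
          omega
        exact Finset.disjoint_left.mp (hdis B hB C hC hBC) hx (this ▸ hy)
  · apply Finset.Subset.antisymm
    · show (Finset.image (Fmap a) ρ).sup id ≤ Finset.range (n - 1)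
      apply Finset.sup_le
      rintro B' hB'
      obtain ⟨B, hB, rfl⟩ := Finset.mem_image.mp hB'
      intro z hz
      obtain ⟨x, hx, rfl⟩ := Finset.mem_image.mp hz
      have hxn := Finset.mem_range.mp (hsub B hB hx)
      simp only [id_eq] at *
      rw [Finset.mem_range]
      unfold fm; split_ifs <;> omega
    · intro y hy
      have hyn := Finset.mem_range.mp hy
      have hgy : gm a y ∈ Finset.range n := by
        rw [Finset.mem_range]; unfold gm; split_ifs <;> omega
      rw [← hsup] at hgy
      obtain ⟨B, hB, hgyB⟩ := Finset.mem_sup.mp hgy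
      have : y ∈ Fmap a B := by
        have : fm a (gm a y) = y := fm_gm a y
        exact this ▸ Finset.mem_image_of_mem _ hgyB
      exact Finset.mem_sup.mpr ⟨Fmap a B, Finset.mem_image_of_mem _ hB, this⟩
  · rw [← Sp_eq ha]
    exact Finset.mem_image_of_mem _ hSρ
  · rintro B' hB' hB'S
    obtain ⟨B, hB, rfl⟩ := Finset.mem_image.mp hB'
    have hBS : B ≠ S := fun h => hB'S (by rw [h, Sp_eq ha])
    have hdisS := hdis B hB S hSρ hBS
    rw [← hcard B hB hBS]
    apply Finset.card_image_of_injOn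
    intro x hx y hy hxy
    have hxa : x ≠ a + 1 := fun h => Finset.disjoint_left.mp hdisS hx (h ▸ ha1)
    have hya : y ≠ a + 1 := fun h => Finset.disjoint_left.mp hdisS hy (h ▸ ha1)
    have := congrArg (gm a) hxy
    rwa [gm_fm a x hxa, gm_fm a y hya] at this

lemma msPartition_split {n a : ℕ} {S : Finset ℕ} {ρ' : Finset (Finset ℕ)}
    (hms : MSPartition (n - 1) (Sp a S) ρ') (ha : a ∈ S) (ha1 : a + 1 ∈ S)
    (hSn : S ⊆ Finset.range n) :
    MSPartition n S (ρ'.image (Gmap a S)) := by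
  obtain ⟨⟨hne, hdis, hsup⟩, hSρ, hcard⟩ := hms
  have han : a + 2 ≤ n := by
    have := Finset.mem_range.mp (hSn ha1); omega
  have hsub : ∀ B ∈ ρ', B ⊆ Finset.range (n - 1) := by
    intro B hB
    have : id B ≤ ρ'.sup id := Finset.le_sup hB
    rwa [hsup] at this
  -- a Gmap image of a non-root block is disjoint from S
  have hdisjS : ∀ B ∈ ρ', B ≠ Sp a S → Disjoint S (B.image (gm a)) := by
    intro B hB hBS
    rw [Finset.disjoint_left]
    rintro x hxS hxg
    obtain ⟨c, hc, rfl⟩ := Finset.mem_image.mp hxg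
    have hxne : gm a c ≠ a + 1 := gm_ne a c
    have hcS : fm a (gm a c) ∈ Sp a S := by
      unfold Sp
      exact Finset.mem_image_of_mem _ (Finset.mem_erase.mpr ⟨hxne, hxS⟩)
    rw [fm_gm] at hcS
    exact Finset.disjoint_left.mp (hdis B hB _ hSρ hBS) hc hcS
  have hGne : ∀ B ∈ ρ', B ≠ Sp a S → Gmap a S B = B.image (gm a) := by
    intro B hB hBS; unfold Gmap; rw [if_neg hBS]
  refine ⟨⟨?_, ?_, ?_⟩, ?_, ?_⟩
  · rintro B' hB'
    obtain ⟨B, hB, rfl⟩ := Finset.mem_image.mp hB'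
    unfold Gmap
    split_ifs
    · exact ⟨a, ha⟩
    · exact (hne B hB).image _
  · rintro B' hB' C' hC' hBC'
    obtain ⟨B, hB, rfl⟩ := Finset.mem_image.mp hB'
    obtain ⟨C, hC, rfl⟩ := Finset.mem_image.mp hC'
    have hBC : B ≠ C := fun h => hBC' (by rw [h])
    by_cases hBS : B = Sp a S
    · subst hBS
      have hCS : C ≠ Sp a S := fun h => hBC h.symm
      rw [hGne C hC hCS]
      unfold Gmap; rw [if_pos rfl]
      exact hdisjS C hC hCS
    · rw [hGne B hB hBS]
      by_cases hCS : C = Sp a S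
      · subst hCS
        unfold Gmap; rw [if_pos rfl]
        exact (hdisjS B hB hBS).symm
      · rw [hGne C hC hCS]
        rw [Finset.disjoint_image (gm_inj a)]
        exact hdis B hB C hC hBC
  · apply Finset.Subset.antisymm
    · show (Finset.image (Gmap a S) ρ').sup id ≤ Finset.range n
      apply Finset.sup_le
      rintro B' hB'
      obtain ⟨B, hB, rfl⟩ := Finset.mem_image.mp hB'
      intro z hz
      simp only [id_eq] at hz
      unfold Gmap at hz
      split_ifs at hz
      · exact hSn hz
      · obtain ⟨x, hx, rfl⟩ := Finset.mem_image.mp hz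
        have := Finset.mem_range.mp (hsub B hB hx)
        rw [Finset.mem_range]
        unfold gm; split_ifs <;> omega
    · intro y hy
      have hyn := Finset.mem_range.mp hy
      by_cases hyS : y ∈ S
      · refine Finset.mem_sup.mpr ⟨S, ?_, hyS⟩
        refine Finset.mem_image.mpr ⟨Sp a S, hSρ, ?_⟩
        unfold Gmap; rw [if_pos rfl]
      · have hya : y ≠ a := fun h => hyS (h ▸ ha)
        have hya1 : y ≠ a + 1 := fun h => hyS (h ▸ ha1)
        have hfy : fm a y ∈ Finset.range (n - 1) := by
          rw [Finset.mem_range]; unfold fm; split_ifs <;> omega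
        rw [← hsup] at hfy
        obtain ⟨B, hB, hfyB⟩ := Finset.mem_sup.mp hfy
        have hBS : B ≠ Sp a S := by
          rintro rfl
          obtain ⟨s, hs, hfs⟩ := Finset.mem_image.mp hfyB
          have hs1 : s ≠ a + 1 := (Finset.mem_erase.mp hs).1
          have hsS : s ∈ S := (Finset.mem_erase.mp hs).2
          have : s = y := by
            have := congrArg (gm a) hfs
            rwa [gm_fm a s hs1, gm_fm a y hya1] at this
          exact hyS (this ▸ hsS)
        refine Finset.mem_sup.mpr ⟨Gmap a S B, Finset.mem_image_of_mem _ hB, ?_⟩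
        rw [hGne B hB hBS]
        have : gm a (fm a y) = y := gm_fm a y hya1
        exact this ▸ Finset.mem_image_of_mem _ hfyB
  · refine Finset.mem_image.mpr ⟨Sp a S, hSρ, ?_⟩
    unfold Gmap; rw [if_pos rfl]
  · rintro B' hB' hB'S
    obtain ⟨B, hB, rfl⟩ := Finset.mem_image.mp hB'
    have hBS : B ≠ Sp a S := by
      rintro rfl
      apply hB'S
      unfold Gmap; rw [if_pos rfl]
    rw [hGne B hB hBS, Finset.card_image_of_injective _ (gm_inj a)]
    exact hcard B hB hBS

lemma key_lt {ρ : Finset (Finset ℕ)} {S B C : Finset ℕ} {a x y : ℕ}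
    (hdis : ∀ B ∈ ρ, ∀ B' ∈ ρ, B ≠ B' → Disjoint B B')
    (hS : S ∈ ρ) (ha : a ∈ S) (ha1 : a + 1 ∈ S)
    (hB : B ∈ ρ) (hC : C ∈ ρ) (hBC : B ≠ C)
    (hx : x ∈ B) (hy : y ∈ C) (h : x < y) : fm a x < fm a y := by
  apply fm_lt a h
  rintro ⟨rfl, rfl⟩
  exact hBC ((block_eq_S hdis hS hB hx ha).trans (block_eq_S hdis hS hC hy ha1).symm)

lemma crosses_of_image {a : ℕ} {B C : Finset ℕ}
    (h : Crosses (B.image (fm a)) (C.image (fm a))) : Crosses B C := by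
  obtain ⟨i', hi', k', hk', j', hj', l', hl', hor⟩ := h
  obtain ⟨i, hi, rfl⟩ := Finset.mem_image.mp hi'
  obtain ⟨k, hk, rfl⟩ := Finset.mem_image.mp hk'
  obtain ⟨j, hj, rfl⟩ := Finset.mem_image.mp hj'
  obtain ⟨l, hl, rfl⟩ := Finset.mem_image.mp hl'
  exact ⟨i, hi, k, hk, j, hj, l, hl, by
    rcases hor with ⟨h1, h2, h3⟩ | ⟨h1, h2, h3⟩
    · exact Or.inl ⟨lt_of_fm_lt a h1, lt_of_fm_lt a h2, lt_of_fm_lt a h3⟩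
    · exact Or.inr ⟨lt_of_fm_lt a h1, lt_of_fm_lt a h2, lt_of_fm_lt a h3⟩⟩

lemma crosses_iff {ρ : Finset (Finset ℕ)} {S B C : Finset ℕ} {a : ℕ}
    (hdis : ∀ B ∈ ρ, ∀ B' ∈ ρ, B ≠ B' → Disjoint B B')
    (hS : S ∈ ρ) (ha : a ∈ S) (ha1 : a + 1 ∈ S)
    (hB : B ∈ ρ) (hC : C ∈ ρ) (hBC : B ≠ C) :
    Crosses B C ↔ Crosses (B.image (fm a)) (C.image (fm a)) := by
  constructor
  · rintro ⟨i, hi, k, hk, j, hj, l, hl, hor⟩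
    refine ⟨fm a i, Finset.mem_image_of_mem _ hi, fm a k, Finset.mem_image_of_mem _ hk,
      fm a j, Finset.mem_image_of_mem _ hj, fm a l, Finset.mem_image_of_mem _ hl, ?_⟩
    rcases hor with ⟨h1, h2, h3⟩ | ⟨h1, h2, h3⟩
    · exact Or.inl ⟨key_lt hdis hS ha ha1 hB hC hBC hi hj h1,
        key_lt hdis hS ha ha1 hC hB hBC.symm hj hk h2,
        key_lt hdis hS ha ha1 hB hC hBC hk hl h3⟩
    · exact Or.inr ⟨key_lt hdis hS ha ha1 hC hB hBC.symm hj hi h1,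
        key_lt hdis hS ha ha1 hB hC hBC hk hj h2,
        key_lt hdis hS ha ha1 hC hB hBC.symm hl hk h3⟩
  · exact crosses_of_image

lemma transGen_comp {α β : Type*} {r : β → β → Prop} {v : α → β} {x y : α}
    (h : Relation.TransGen (fun p q => r (v p) (v q)) x y) :
    Relation.TransGen r (v x) (v y) := by
  induction h with
  | single h => exact .single h
  | tail _ h ih => exact .tail ih h

lemma rootConnected_transfer
    (ρ : Finset (Finset ℕ)) (r : Finset ℕ → Finset ℕ → Prop) (S : Finset ℕ)
    (u v : Finset ℕ → Finset ℕ)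
    (huv : ∀ B ∈ ρ, v (u B) = B)
    (hcross : ∀ B ∈ ρ, ∀ C ∈ ρ, B ≠ C → (Crosses B C ↔ Crosses (u B) (u C)))
    (hrc : RootConnected ρ r S) :
    RootConnected (ρ.image u)
      (fun B B' => B ∈ ρ.image u ∧ B' ∈ ρ.image u ∧ r (v B) (v B')) (u S) := by
  obtain ⟨⟨ho1, ho2⟩, hac, hSρ, hnoS, huniq⟩ := hrc
  have hv : ∀ B ∈ ρ.image u, v B ∈ ρ ∧ u (v B) = B := by
    intro B hB
    obtain ⟨C, hC, rfl⟩ := Finset.mem_image.mp hB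
    rw [huv C hC]; exact ⟨hC, rfl⟩
  refine ⟨⟨?_, ?_⟩, ?_, ?_, ?_, ?_⟩
  · rintro B B' ⟨hB, hB', hr⟩
    obtain ⟨hvB, huvB⟩ := hv B hB
    obtain ⟨hvB', huvB'⟩ := hv B' hB'
    obtain ⟨_, _, hne, hcr⟩ := ho1 _ _ hr
    refine ⟨hB, hB', fun h => hne (congrArg v h), ?_⟩
    have := (hcross _ hvB _ hvB' hne).mp hcr
    rwa [huvB, huvB'] at this
  · intro B hB B' hB' hne hcr
    obtain ⟨hvB, huvB⟩ := hv B hB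
    obtain ⟨hvB', huvB'⟩ := hv B' hB'
    have hne' : v B ≠ v B' := fun h => hne (by rw [← huvB, ← huvB', h])
    have hcr' : Crosses (v B) (v B') :=
      (hcross _ hvB _ hvB' hne').mpr (by rwa [huvB, huvB'])
    have hiff := ho2 _ hvB _ hvB' hne' hcr'
    constructor
    · rintro ⟨_, _, h⟩ ⟨_, _, h'⟩
      exact (hiff.mp h) h'
    · intro h
      exact ⟨hB, hB', hiff.mpr (fun h' => h ⟨hB', hB, h'⟩)⟩
  · intro B htg
    have htg' : Relation.TransGen (fun X Y => r (v X) (v Y)) B B :=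
      Relation.TransGen.mono (by intro X Y h; exact h.2.2) B B htg
    exact hac _ (transGen_comp htg')
  · exact Finset.mem_image_of_mem u hSρ
  · rintro B' ⟨hB', hS', hr⟩
    rw [huv S hSρ] at hr
    exact hnoS _ hr
  · intro B hB hnone
    obtain ⟨hvB, huvB⟩ := hv B hB
    have hvBS : v B = S := by
      apply huniq _ hvB
      intro C' hrC'
      have hC' : C' ∈ ρ := (ho1 _ _ hrC').1
      exact hnone (u C')
        ⟨Finset.mem_image_of_mem u hC', hB, by rw [huv C' hC']; exact hrC'⟩
    rw [← huvB, hvBS]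


lemma FG' {a : ℕ} {S : Finset ℕ} (ha : a ∈ S) (X : Finset ℕ) :
    (Gmap a S X).image (fm a) = X := FG ha X

lemma GF_image {ρ : Finset (Finset ℕ)} {S : Finset ℕ} {a : ℕ}
    (hdis : ∀ B ∈ ρ, ∀ B' ∈ ρ, B ≠ B' → Disjoint B B')
    (hSρ : S ∈ ρ) (ha : a ∈ S) (ha1 : a + 1 ∈ S) :
    (ρ.image (Fmap a)).image (Gmap a S) = ρ := by
  rw [Finset.image_image]
  refine (Finset.image_congr (g := id) ?_).trans Finset.image_id
  intro B hB
  exact GF hdis hSρ ha ha1 hB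

lemma FG_image {ρ' : Finset (Finset ℕ)} {S : Finset ℕ} {a : ℕ} (ha : a ∈ S) :
    (ρ'.image (Gmap a S)).image (Fmap a) = ρ' := by
  rw [Finset.image_image]
  refine (Finset.image_congr (g := id) ?_).trans Finset.image_id
  intro B _
  exact FG ha B

lemma forward_mem {n a : ℕ} {S : Finset ℕ}
    {ρ : Finset (Finset ℕ)} {r : Finset ℕ → Finset ℕ → Prop}
    (ha : a ∈ S) (ha1 : a + 1 ∈ S)
    (hms : MSPartition n S ρ) (hrc : RootConnected ρ r S) :
    MSPartition (n - 1) (Sp a S) (ρ.image (Fmap a)) ∧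
      RootConnected (ρ.image (Fmap a))
        (fun B B' => B ∈ ρ.image (Fmap a) ∧ B' ∈ ρ.image (Fmap a) ∧
          r (Gmap a S B) (Gmap a S B')) (Sp a S) := by
  obtain ⟨⟨hne, hdis, hsup⟩, hSρ, hcard⟩ := hms
  refine ⟨msPartition_merge ⟨⟨hne, hdis, hsup⟩, hSρ, hcard⟩ ha ha1, ?_⟩
  have h2 := rootConnected_transfer ρ r S (Fmap a) (Gmap a S)
    (fun B hB => GF hdis hSρ ha ha1 hB)
    (fun B hB C hC hBC => crosses_iff hdis hSρ ha ha1 hB hC hBC) hrc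
  rwa [Sp_eq ha] at h2

lemma backward_mem {n a : ℕ} {S : Finset ℕ}
    {ρ' : Finset (Finset ℕ)} {r' : Finset ℕ → Finset ℕ → Prop}
    (ha : a ∈ S) (ha1 : a + 1 ∈ S) (hSn : S ⊆ Finset.range n)
    (hms : MSPartition (n - 1) (Sp a S) ρ')
    (hrc : RootConnected ρ' r' (Sp a S)) :
    MSPartition n S (ρ'.image (Gmap a S)) ∧
      RootConnected (ρ'.image (Gmap a S))
        (fun B B' => B ∈ ρ'.image (Gmap a S) ∧ B' ∈ ρ'.image (Gmap a S) ∧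
          r' (Fmap a B) (Fmap a B')) S := by
  have hms2 := msPartition_split hms ha ha1 hSn
  obtain ⟨⟨hne2, hdis2, hsup2⟩, hS2, hcard2⟩ := hms2
  refine ⟨⟨⟨hne2, hdis2, hsup2⟩, hS2, hcard2⟩, ?_⟩
  have hGS : Gmap a S (Sp a S) = S := by unfold Gmap; rw [if_pos rfl]
  have h2 := rootConnected_transfer ρ' r' (Sp a S) (Gmap a S) (Fmap a)
    (fun B _ => FG ha B) ?_ hrc
  · rwa [hGS] at h2
  · intro B hB C hC hBC
    have h1 : Gmap a S B ∈ ρ'.image (Gmap a S) := Finset.mem_image_of_mem _ hB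
    have h1' : Gmap a S C ∈ ρ'.image (Gmap a S) := Finset.mem_image_of_mem _ hC
    have hGBC : Gmap a S B ≠ Gmap a S C := fun h =>
      hBC (by rw [← FG ha B, ← FG ha C, h])
    have hiff := crosses_iff hdis2 hS2 ha ha1 h1 h1' hGBC
    rw [FG' ha, FG' ha] at hiff
    exact hiff.symm

/-- Merging invariance: if the root set `S` contains two consecutive elements
`a, a+1`, they may be merged into a single point (all larger elements of the
ground set shifting down by one) without changing the count. -/
theorem countA_merge (n k : ℕ) (S : Finset ℕ) (hS : S ⊆ Finset.range n)
    (hn : n = S.card + 2 * k) (a : ℕ) (ha : a ∈ S) (ha1 : a + 1 ∈ S) :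
    countA n S
      = countA (n - 1) ((S.erase (a + 1)).image fun x => if x ≤ a then x else x - 1) := by
  show countA n S = countA (n - 1) (Sp a S)
  apply Nat.card_congr
  refine
    { toFun := fun p =>
        ⟨(p.1.1.image (Fmap a),
          fun B B' => B ∈ p.1.1.image (Fmap a) ∧ B' ∈ p.1.1.image (Fmap a) ∧
            p.1.2 (Gmap a S B) (Gmap a S B')),
          forward_mem ha ha1 p.2.1 p.2.2⟩
      invFun := fun p =>
        ⟨(p.1.1.image (Gmap a S),
          fun B B' => B ∈ p.1.1.image (Gmap a S) ∧ B' ∈ p.1.1.image (Gmap a S) ∧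
            p.1.2 (Fmap a B) (Fmap a B')),
          backward_mem ha ha1 hS p.2.1 p.2.2⟩
      left_inv := ?_
      right_inv := ?_ }
  · rintro ⟨⟨ρ, r⟩, hms, hrc⟩
    apply Subtype.ext
    dsimp only
    obtain ⟨⟨hne, hdis, hsup⟩, hSρ, hcard⟩ := hms
    have hfst : (ρ.image (Fmap a)).image (Gmap a S) = ρ := GF_image hdis hSρ ha ha1
    rw [Prod.mk.injEq]
    refine ⟨hfst, ?_⟩
    funext B B'
    apply propext
    constructor
    · rintro ⟨hB, hB', hFB, hFB', hr⟩
      rw [hfst] at hB hB'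
      rwa [GF hdis hSρ ha ha1 hB, GF hdis hSρ ha ha1 hB'] at hr
    · intro h
      obtain ⟨hB, hB', -, -⟩ := hrc.1.1 _ _ h
      refine ⟨by rwa [hfst], by rwa [hfst],
        Finset.mem_image_of_mem _ hB, Finset.mem_image_of_mem _ hB', ?_⟩
      rwa [GF hdis hSρ ha ha1 hB, GF hdis hSρ ha ha1 hB']
  · rintro ⟨⟨ρ', r'⟩, hms, hrc⟩
    apply Subtype.ext
    dsimp only
    have hfst : (ρ'.image (Gmap a S)).image (Fmap a) = ρ' := FG_image ha
    rw [Prod.mk.injEq]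
    refine ⟨hfst, ?_⟩
    funext B B'
    apply propext
    constructor
    · rintro ⟨hB, hB', hGB, hGB', hr⟩
      rwa [FG ha, FG ha] at hr
    · intro h
      obtain ⟨hB, hB', -, -⟩ := hrc.1.1 _ _ h
      refine ⟨by rwa [hfst], by rwa [hfst],
        Finset.mem_image_of_mem _ hB, Finset.mem_image_of_mem _ hB', ?_⟩
      rwa [FG ha, FG ha]
end

section
/- The refined Lassalle sequence is symmetric: for every k ≥ 0 and 1 ≤ ℓ ≤ 2k+1, A_{k+1}(ℓ) = A_{k+1}(2k+2−ℓ). -/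
namespace RefLas

def f (n i : ℕ) : ℕ := if i = 0 then 0 else if i < n then n - i else i

lemma f_invol (n : ℕ) : Function.Involutive (f n) := by
  intro i; unfold f; split_ifs <;> omega

lemma f_mem {n x : ℕ} (hn : 1 ≤ n) (hx : x < n) : f n x < n := by
  unfold f; split_ifs <;> omega

lemma f_lt {n x y : ℕ} (hx : x < n) (hy : y < n) :
    f n x < f n y ↔ (y ≠ 0 ∧ (x = 0 ∨ y < x)) := by
  unfold f; split_ifs <;> omega

lemma crosses_image {n : ℕ} {B B' : Finset ℕ}
    (hB : ∀ x ∈ B, x < n) (hB' : ∀ x ∈ B', x < n) (h : Crosses B B') :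
    Crosses (B.image (f n)) (B'.image (f n)) := by
  obtain ⟨i, hi, k, hk, j, hj, l, hl, hord⟩ := h
  have hn : 1 ≤ n := Nat.one_le_iff_ne_zero.2 (by rintro rfl; exact absurd (hB i hi) (by omega))
  have hin := hB i hi; have hkn := hB k hk
  have hjn := hB' j hj; have hln := hB' l hl
  rcases hord with ⟨o1, o2, o3⟩ | ⟨o1, o2, o3⟩
  · by_cases hz : i = 0
    · exact ⟨f n i, Finset.mem_image_of_mem _ hi, f n k, Finset.mem_image_of_mem _ hk,
        f n l, Finset.mem_image_of_mem _ hl, f n j, Finset.mem_image_of_mem _ hj,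
        Or.inl ⟨(f_lt hin hln).2 (by omega), (f_lt hln hkn).2 (by omega),
          (f_lt hkn hjn).2 (by omega)⟩⟩
    · exact ⟨f n i, Finset.mem_image_of_mem _ hi, f n k, Finset.mem_image_of_mem _ hk,
        f n j, Finset.mem_image_of_mem _ hj, f n l, Finset.mem_image_of_mem _ hl,
        Or.inr ⟨(f_lt hjn hin).2 (by omega), (f_lt hkn hjn).2 (by omega),
          (f_lt hln hkn).2 (by omega)⟩⟩
  · by_cases hz : l = 0
    · exact ⟨f n k, Finset.mem_image_of_mem _ hk, f n i, Finset.mem_image_of_mem _ hi,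
        f n j, Finset.mem_image_of_mem _ hj, f n l, Finset.mem_image_of_mem _ hl,
        Or.inr ⟨(f_lt hjn hkn).2 (by omega), (f_lt hin hjn).2 (by omega),
          (f_lt hln hin).2 (by omega)⟩⟩
    · exact ⟨f n i, Finset.mem_image_of_mem _ hi, f n k, Finset.mem_image_of_mem _ hk,
        f n j, Finset.mem_image_of_mem _ hj, f n l, Finset.mem_image_of_mem _ hl,
        Or.inl ⟨(f_lt hin hjn).2 (by omega), (f_lt hjn hkn).2 (by omega),
          (f_lt hkn hln).2 (by omega)⟩⟩

lemma gg (n : ℕ) (B : Finset ℕ) : (B.image (f n)).image (f n) = B := by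
  rw [Finset.image_image, Function.Involutive.comp_self (f_invol n), Finset.image_id]

lemma transport (n : ℕ) (hn : 1 ≤ n) (S : Finset ℕ) (ρ : Finset (Finset ℕ))
    (r : Finset ℕ → Finset ℕ → Prop)
    (h : MSPartition n S ρ ∧ RootConnected ρ r S) :
    MSPartition n (S.image (f n)) (ρ.image (fun B => B.image (f n))) ∧
      RootConnected (ρ.image (fun B => B.image (f n)))
        (fun B B' => r (B.image (f n)) (B'.image (f n))) (S.image (f n)) := by
  obtain ⟨⟨⟨hne, hdisj, hsup⟩, hSmem, hcard⟩, ⟨hor1, hor2⟩, hacyc, hSmem', hnoin, huniq⟩ := h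
  set g : Finset ℕ → Finset ℕ := fun B => B.image (f n) with hg
  have hggB : ∀ B, g (g B) = B := fun B => gg n B
  have hsub : ∀ B ∈ ρ, ∀ x ∈ B, x < n := by
    intro B hB x hx
    have : B ≤ ρ.sup id := Finset.le_sup (f := id) hB
    rw [hsup] at this
    exact Finset.mem_range.1 (this hx)
  have hgsub : ∀ B ∈ ρ, ∀ x ∈ g B, x < n := by
    intro B hB x hx
    obtain ⟨y, hy, rfl⟩ := Finset.mem_image.1 hx
    exact f_mem hn (hsub B hB y hy)
  have hmemimg : ∀ {B : Finset ℕ}, g B ∈ ρ → B ∈ ρ.image g := by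
    intro B hB
    have : g (g B) ∈ ρ.image g := Finset.mem_image_of_mem g hB
    rwa [hggB B] at this
  have hmemimg' : ∀ {B : Finset ℕ}, B ∈ ρ.image g → g B ∈ ρ := by
    intro B hB
    obtain ⟨C, hC, rfl⟩ := Finset.mem_image.1 hB
    rwa [hggB C]
  have hcrossback : ∀ {B B' : Finset ℕ}, g B ∈ ρ → g B' ∈ ρ → Crosses (g B) (g B') →
      Crosses B B' := by
    intro B B' hB hB' hc
    have := crosses_image (hsub _ hB) (hsub _ hB') hc
    rwa [show Finset.image (f n) (g B) = B from hggB B,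
      show Finset.image (f n) (g B') = B' from hggB B'] at this
  have hginj : ∀ {B B' : Finset ℕ}, g B = g B' → B = B' := by
    intro B B' hBB'
    rw [← hggB B, ← hggB B']
    exact congrArg g hBB'
  refine ⟨⟨⟨?_, ?_, ?_⟩, Finset.mem_image_of_mem g hSmem, ?_⟩, ⟨?_, ?_⟩, ?_, ?_, ?_, ?_⟩
  · -- nonempty
    intro B hB
    obtain ⟨C, hC, rfl⟩ := Finset.mem_image.1 hB
    exact (hne C hC).image _
  · -- disjoint
    intro B hB B' hB' hBB'
    obtain ⟨C, hC, rfl⟩ := Finset.mem_image.1 hB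
    obtain ⟨D, hD, rfl⟩ := Finset.mem_image.1 hB'
    have hCD : C ≠ D := fun e => hBB' (by rw [e])
    exact (Finset.disjoint_image ((f_invol n).injective)).2 (hdisj C hC D hD hCD)
  · -- sup
    ext x
    simp only [Finset.mem_sup, Finset.mem_range, id]
    constructor
    · rintro ⟨B, hB, hx⟩
      obtain ⟨C, hC, rfl⟩ := Finset.mem_image.1 hB
      exact hgsub C hC x hx
    · intro hx
      have hfx : f n x < n := f_mem hn hx
      have hmem : f n x ∈ ρ.sup id := by rw [hsup]; exact Finset.mem_range.2 hfx
      obtain ⟨B, hB, hfxB⟩ := Finset.mem_sup.1 hmem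
      refine ⟨g B, Finset.mem_image_of_mem g hB, ?_⟩
      have : f n (f n x) ∈ g B := Finset.mem_image_of_mem _ hfxB
      rwa [f_invol n x] at this
  · -- cards
    intro B hB hBS
    obtain ⟨C, hC, rfl⟩ := Finset.mem_image.1 hB
    have hCS : C ≠ S := fun e => hBS (by rw [e])
    show (Finset.image (f n) C).card = 2
    rw [Finset.card_image_of_injective _ ((f_invol n).injective)]
    exact hcard C hC hCS
  · -- orientation 1
    intro B B' hr
    obtain ⟨h1, h2, h3, h4⟩ := hor1 _ _ hr
    exact ⟨hmemimg h1, hmemimg h2, fun e => h3 (by rw [e]), hcrossback h1 h2 h4⟩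
  · -- orientation 2
    intro B hB B' hB' hBB' hc
    have h1 := hmemimg' hB
    have h2 := hmemimg' hB'
    have hne' : g B ≠ g B' := fun e => hBB' (hginj e)
    have hBsub : ∀ x ∈ B, x < n := by
      obtain ⟨C, hC, rfl⟩ := Finset.mem_image.1 hB
      exact hgsub C hC
    have hB'sub : ∀ x ∈ B', x < n := by
      obtain ⟨C, hC, rfl⟩ := Finset.mem_image.1 hB'
      exact hgsub C hC
    exact hor2 _ h1 _ h2 hne' (crosses_image hBsub hB'sub hc)
  · -- acyclic
    intro B hB
    exact hacyc (g B) (Relation.TransGen.lift g (fun a b hab => hab) _ _ hB)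
  · -- S mem
    exact Finset.mem_image_of_mem g hSmem'
  · -- no incoming
    intro B' hr
    have hr' : r (B'.image (f n)) ((S.image (f n)).image (f n)) := hr
    rw [show (S.image (f n)).image (f n) = S from hggB S] at hr'
    exact hnoin _ hr'
  · -- unique source
    intro B hB hno
    have hgB := hmemimg' hB
    have hnoB : ∀ B'', ¬ r B'' (g B) := by
      intro B'' hr
      have hB''ρ : B'' ∈ ρ := (hor1 _ _ hr).1
      apply hno (g B'')
      show r ((g B'').image (f n)) (B.image (f n))
      rw [show (g B'').image (f n) = B'' from hggB B'']
      exact hr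
    have hBS := huniq (g B) hgB hnoB
    rw [← hggB B, hBS]

def Phi (n : ℕ) (p : Finset (Finset ℕ) × (Finset ℕ → Finset ℕ → Prop)) :
    Finset (Finset ℕ) × (Finset ℕ → Finset ℕ → Prop) :=
  (p.1.image (fun B => B.image (f n)),
   fun B B' => p.2 (B.image (f n)) (B'.image (f n)))

lemma Phi_invol (n : ℕ) : Function.Involutive (Phi n) := by
  intro p
  unfold Phi
  refine Prod.ext ?_ ?_
  · show (p.1.image _).image _ = p.1
    rw [Finset.image_image]
    rw [show ((fun B : Finset ℕ => B.image (f n)) ∘ fun B : Finset ℕ => B.image (f n)) = id by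
      funext B; exact gg n B]
    exact Finset.image_id
  · funext B B'
    show p.2 ((B.image (f n)).image (f n)) ((B'.image (f n)).image (f n)) = p.2 B B'
    rw [gg, gg]

lemma image_root {n l : ℕ} (h1 : 1 ≤ l) (h2 : l < n) :
    ({0, l} : Finset ℕ).image (f n) = {0, n - l} := by
  rw [Finset.image_insert, Finset.image_singleton]
  have : f n 0 = 0 := by unfold f; simp
  have h2' : f n l = n - l := by unfold f; split_ifs <;> omega
  rw [this, h2']

end RefLas

/-- Symmetry of the refined Lassalle sequence:
`A_{k+1}(ℓ) = A_{k+1}(2k+2-ℓ)` for `1 ≤ ℓ ≤ 2k+1`, where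
`A_{k+1}(ℓ) = countA (2k+2) {0, ℓ}` counts root-connected orientations of
crossing graphs of perfect matchings of `{0,...,2k+1}` with root `{0, ℓ}`. -/
theorem refined_lassalle_symmetric (k : ℕ) (l : ℕ) (h1 : 1 ≤ l) (h2 : l ≤ 2 * k + 1) :
    countA (2 * k + 2) {0, l} = countA (2 * k + 2) {0, 2 * k + 2 - l} := by
  set n := 2 * k + 2 with hn
  have hn1 : 1 ≤ n := by omega
  have hln : l < n := by omega
  have img1 : ({0, l} : Finset ℕ).image (RefLas.f n) = {0, n - l} :=
    RefLas.image_root h1 hln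
  have img2 : ({0, n - l} : Finset ℕ).image (RefLas.f n) = {0, l} := by
    have e : n - (n - l) = l := by omega
    rw [RefLas.image_root (show 1 ≤ n - l by omega) (show n - l < n by omega), e]
  apply Nat.card_congr
  refine ((RefLas.Phi_invol n).toPerm _).subtypeEquiv fun p => ⟨?_, ?_⟩
  · intro hp
    have := RefLas.transport n hn1 {0, l} p.1 p.2 hp
    rw [img1] at this
    exact this
  · intro hp
    have := RefLas.transport n hn1 {0, n - l} (RefLas.Phi n p).1 (RefLas.Phi n p).2 hp
    rw [img2] at this
    have hPP : RefLas.Phi n (RefLas.Phi n p) = p := RefLas.Phi_invol n p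
    have e1 : ((RefLas.Phi n p).1.image (fun B => B.image (RefLas.f n))) = p.1 :=
      congrArg Prod.fst hPP
    have e2 : (fun B B' => (RefLas.Phi n p).2 (B.image (RefLas.f n)) (B'.image (RefLas.f n))) = p.2 :=
      congrArg Prod.snd hPP
    rw [e1, e2] at this
    exact this
end

section
/- The number of acyclic orientations of a finite connected graph G with a fixed unique source v does not depend on the choice of vertex v. -/
open Relation

/-- `IsAO G r v`: `r` is an acyclic orientation of `G` with unique source `v`. -/
def IsAO {V : Type*} (G : SimpleGraph V) (r : V → V → Prop) (v : V) : Prop :=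
  (∀ a b, r a b → G.Adj a b) ∧ (∀ a b, G.Adj a b → (r a b ↔ ¬ r b a)) ∧
  (∀ x, ¬ Relation.TransGen r x x) ∧ (∀ x, ¬ r x v) ∧
  (∀ u, (∀ x, ¬ r x u) → u = v)

/-- Reverse all edges of `r` between vertices that can reach `t`. -/
def AOflip {V : Type*} (r : V → V → Prop) (t : V) : V → V → Prop :=
  fun a b => (ReflTransGen r a t ∧ ReflTransGen r b t ∧ r b a) ∨
    (¬ (ReflTransGen r a t ∧ ReflTransGen r b t) ∧ r a b)

section
variable {V : Type*} [Finite V] {G : SimpleGraph V} {r : V → V → Prop} {v w : V}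

theorem IsAO.wf (h : IsAO G r v) : WellFounded r := by
  haveI : IsTrans V (Relation.TransGen r) := ⟨fun _ _ _ => TransGen.trans⟩
  haveI : IsIrrefl V (Relation.TransGen r) := ⟨h.2.2.1⟩
  exact Subrelation.wf (fun hxy => TransGen.single hxy)
    (Finite.wellFounded_of_trans_of_irrefl (Relation.TransGen r))

theorem IsAO.reach_all (h : IsAO G r v) (x : V) : ReflTransGen r v x := by
  induction x using h.wf.induction with
  | _ x IH =>
    by_cases hx : ∀ y, ¬ r y x
    · rw [h.2.2.2.2 x hx]
    · push_neg at hx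
      obtain ⟨y, hy⟩ := hx
      exact (IH y hy).tail hy

theorem IsAO.flip (h : IsAO G r v) : IsAO G (AOflip r w) w := by
  obtain ⟨h1, h2, h3, h4, h5⟩ := h
  have h' : IsAO G r v := ⟨h1, h2, h3, h4, h5⟩
  -- backward closure of the reach set
  have bc : ∀ {a b}, r a b → ReflTransGen r b w → ReflTransGen r a w :=
    fun hab hb => hb.head hab
  -- single-step facts about the flip
  have s1 : ∀ {a b}, AOflip r w a b → ReflTransGen r b w → ReflTransGen r a w := by
    rintro a b (⟨ha, hb, hba⟩ | ⟨hn, hab⟩) hbw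
    · exact ha
    · exact bc hab hbw
  have s2 : ∀ {a b}, AOflip r w a b → ReflTransGen r a w → ReflTransGen r b w → r b a := by
    rintro a b (⟨_, _, hba⟩ | ⟨hn, hab⟩) haw hbw
    · exact hba
    · exact absurd ⟨haw, hbw⟩ hn
  have s3 : ∀ {a b}, AOflip r w a b → ¬ ReflTransGen r a w → r a b := by
    rintro a b (⟨ha, _, _⟩ | ⟨_, hab⟩) haw
    · exact absurd ha haw
    · exact hab
  -- transitive closure facts
  have t : ∀ a b, TransGen (AOflip r w) a b →
      (ReflTransGen r b w → ReflTransGen r a w) ∧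
      (ReflTransGen r a w → ReflTransGen r b w → TransGen r b a) ∧
      (¬ ReflTransGen r a w → TransGen r a b) := by
    intro a b hab
    induction hab with
    | single hstep =>
      exact ⟨fun hb => s1 hstep hb, fun ha hb => TransGen.single (s2 hstep ha hb),
        fun ha => TransGen.single (s3 hstep ha)⟩
    | @tail b c hab hbc IH =>
      refine ⟨fun hc => IH.1 (s1 hbc hc), fun ha hc => ?_, fun ha => ?_⟩
      · exact (TransGen.single (s2 hbc (s1 hbc hc) hc)).trans (IH.2.1 ha (s1 hbc hc))
      · have hb : ¬ ReflTransGen r b w := fun hb => ha (IH.1 hb)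
        exact (IH.2.2 ha).tail (s3 hbc hb)
  refine ⟨?_, ?_, ?_, ?_, ?_⟩
  · rintro a b (⟨_, _, hba⟩ | ⟨_, hab⟩)
    · exact (h1 b a hba).symm
    · exact h1 a b hab
  · intro a b hadj
    have := h2 a b hadj
    have h2ab := h2 a b hadj
    by_cases ha : ReflTransGen r a w <;> by_cases hb : ReflTransGen r b w <;>
      · unfold AOflip
        tauto
  · intro x hx
    by_cases hxw : ReflTransGen r x w
    · exact h3 x ((t x x hx).2.1 hxw hxw)
    · exact h3 x ((t x x hx).2.2 hxw)
  · rintro x (⟨hx, hw, hwx⟩ | ⟨hn, hxw⟩)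
    · exact h3 w (TransGen.head' hwx hx)
    · exact hn ⟨bc hxw ReflTransGen.refl, ReflTransGen.refl⟩
  · intro u hu
    by_cases huw : ReflTransGen r u w
    · rcases huw.cases_head with h | ⟨b, hub, hbw⟩
      · exact h
      · exact absurd (Or.inl ⟨hbw, huw, hub⟩) (hu b)
    · exfalso
      have : u ≠ v := fun h => huw (h ▸ h'.reach_all w)
      have hsrc : ¬ ∀ x, ¬ r x u := fun hs => this (h5 u hs)
      push_neg at hsrc
      obtain ⟨x, hx⟩ := hsrc
      exact hu x (Or.inr ⟨fun hp => huw hp.2, hx⟩)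

theorem IsAO.flip_flip (h : IsAO G r v) : AOflip (AOflip r w) v = r := by
  have h' := h.flip (w := w)
  have bc : ∀ {a b}, r a b → ReflTransGen r b w → ReflTransGen r a w :=
    fun hab hb => hb.head hab
  have s1 : ∀ {a b}, AOflip r w a b → ReflTransGen r b w → ReflTransGen r a w := by
    rintro a b (⟨ha, hb, hba⟩ | ⟨hn, hab⟩) hbw
    · exact ha
    · exact bc hab hbw
  -- R' = R : reaching `v` in the flip is the same as reaching `w` in `r`
  have rev : ∀ {a b}, ReflTransGen r a b → ReflTransGen r b w →
      ReflTransGen (AOflip r w) b a := by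
    intro a b hab
    induction hab with
    | refl => exact fun _ => ReflTransGen.refl
    | @tail b c hab hbc IH =>
      intro hcw
      have hbw : ReflTransGen r b w := bc hbc hcw
      exact (IH hbw).head (Or.inl ⟨hcw, hbw, hbc⟩)
  have Req : ∀ x, ReflTransGen (AOflip r w) x v ↔ ReflTransGen r x w := by
    intro x
    constructor
    · intro hx
      induction hx using ReflTransGen.head_induction_on with
      | refl => exact h.reach_all w
      | head hab _ IH => exact s1 hab IH
    · intro hx
      exact rev (h.reach_all x) hx
  funext a b
  simp only [AOflip, Req, eq_iff_iff]
  by_cases ha : ReflTransGen r a w <;> by_cases hb : ReflTransGen r b w <;> tauto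

end

/-- Greene–Zaslavsky: the number of acyclic orientations of a finite connected
graph `G` with a fixed unique source `v` does not depend on the choice of `v`. -/
theorem card_acyclic_unique_source_independent {V : Type*} [Fintype V]
    (G : SimpleGraph V) (hG : G.Connected) (v w : V) :
    Nat.card {r : V → V → Prop //
      (∀ a b, r a b → G.Adj a b) ∧ (∀ a b, G.Adj a b → (r a b ↔ ¬ r b a)) ∧
      (∀ x, ¬ Relation.TransGen r x x) ∧ (∀ x, ¬ r x v) ∧
      (∀ u, (∀ x, ¬ r x u) → u = v)} =
    Nat.card {r : V → V → Prop //
      (∀ a b, r a b → G.Adj a b) ∧ (∀ a b, G.Adj a b → (r a b ↔ ¬ r b a)) ∧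
      (∀ x, ¬ Relation.TransGen r x x) ∧ (∀ x, ¬ r x w) ∧
      (∀ u, (∀ x, ¬ r x u) → u = w)} := by
  refine Nat.card_congr
    ⟨fun s => ⟨AOflip s.1 w, (IsAO.flip (s.2 : IsAO G s.1 v) : IsAO G _ w)⟩,
     fun s => ⟨AOflip s.1 v, (IsAO.flip (s.2 : IsAO G s.1 w) : IsAO G _ v)⟩, ?_, ?_⟩
  · rintro ⟨r, hr⟩
    exact Subtype.ext (IsAO.flip_flip (hr : IsAO G r v))
  · rintro ⟨r, hr⟩
    exact Subtype.ext (IsAO.flip_flip (hr : IsAO G r w))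
end
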